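/- Optimality of the SIM for linearly independent pure states: Let |φ_1⟩,…,|φ_n⟩ be unit vectors in ℂ^n with prior probabilities p_i > 0 summing to 1 such that the weighted vectors ψ_i = √(p_i)|φ_i⟩ are linearly independent (hence a basis of ℂ^n), and set ρ_i = |φ_i⟩⟨φ_i| and Δ = Σ_i ψ_i ψ_i^*. Let λ_min be the smallest eigenvalue of Δ and let β satisfy 1 − nλ_min ≤ β < 1. Then the SIM with γ = √((1−β)/n) is a measurement with P_I = β and satisfies P_D({Π_i}) ≤ P_D(SIM) for every measurement {Π_i}_{i=0}^n with P_I({Π_i}) = β. -/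

import Mathlib

open Matrix BigOperators ComplexOrder

lemma myVecMulVec_mulVec {n : ℕ} (a b v : Fin n → ℂ) :
    Matrix.vecMulVec a b *ᵥ v = (b ⬝ᵥ v) • a := by
  ext i
  simp only [Matrix.mulVec, Matrix.vecMulVec_apply, dotProduct, Pi.smul_apply,
    smul_eq_mul, Finset.sum_mul, Finset.mul_sum, mul_assoc]
  exact Finset.sum_congr rfl fun j _ => by ring

lemma mySum_mulVec {n m : ℕ} (s : Finset (Fin m)) (M : Fin m → Matrix (Fin n) (Fin n) ℂ)
    (v : Fin n → ℂ) : (∑ i ∈ s, M i) *ᵥ v = ∑ i ∈ s, M i *ᵥ v := by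
  ext j
  simp only [Matrix.mulVec, dotProduct, Finset.sum_apply, Matrix.sum_apply,
    Finset.sum_mul]
  rw [Finset.sum_comm]

lemma myDotProduct_sum {n m : ℕ} (s : Finset (Fin m)) (v : Fin n → ℂ) (w : Fin m → Fin n → ℂ) :
    v ⬝ᵥ (∑ i ∈ s, w i) = ∑ i ∈ s, v ⬝ᵥ w i := by
  simp only [dotProduct, Finset.sum_apply, Finset.mul_sum]
  rw [Finset.sum_comm]

lemma mySum_dotProduct {n m : ℕ} (s : Finset (Fin m)) (v : Fin n → ℂ) (w : Fin m → Fin n → ℂ) :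
    (∑ i ∈ s, w i) ⬝ᵥ v = ∑ i ∈ s, w i ⬝ᵥ v := by
  simp only [dotProduct, Finset.sum_apply, Finset.sum_mul]
  rw [Finset.sum_comm]

lemma myTrace_vecMulVec_mul {n : ℕ} (a b : Fin n → ℂ) (M : Matrix (Fin n) (Fin n) ℂ) :
    (Matrix.vecMulVec a b * M).trace = b ⬝ᵥ (M *ᵥ a) := by
  simp only [Matrix.trace, Matrix.diag, Matrix.mul_apply, Matrix.vecMulVec_apply,
    dotProduct, Matrix.mulVec]
  rw [Finset.sum_comm]
  simp [dotProduct, Finset.mul_sum, mul_comm, mul_assoc, mul_left_comm]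

lemma myVecMulVec_conj {n : ℕ} (M : Matrix (Fin n) (Fin n) ℂ) (a : Fin n → ℂ) :
    Matrix.vecMulVec (M *ᵥ a) (star (M *ᵥ a)) = M * Matrix.vecMulVec a (star a) * Mᴴ := by
  rw [Matrix.vecMulVec_eq (Fin 1), Matrix.vecMulVec_eq (Fin 1), Matrix.star_mulVec,
    Matrix.replicateCol_mulVec, Matrix.replicateRow_vecMul, Matrix.mul_assoc, Matrix.mul_assoc, Matrix.mul_assoc]

lemma myVecMulVec_smul {n : ℕ} (c : ℂ) (a : Fin n → ℂ) :
    Matrix.vecMulVec (c • a) (star (c • a)) = (c * star c) • Matrix.vecMulVec a (star a) := by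
  ext i j
  simp [Matrix.vecMulVec_apply, mul_comm, mul_assoc, mul_left_comm]


/-- Optimality of the SIM for linearly independent pure states: for unit
vectors φ_i with priors p_i such that the weighted vectors ψ_i = √p_i φ_i are
linearly independent, and 1 − nλ_min ≤ β < 1, the SIM with γ = √((1−β)/n) is a
measurement with P_I = β maximizing P_D among measurements with P_I = β. -/
theorem stmt_10 {n : ℕ}
    (φ : Fin n → (Fin n → ℂ)) (hunit : ∀ i, star (φ i) ⬝ᵥ φ i = 1)
    (p : Fin n → ℝ) (hp : ∀ i, 0 < p i) (hpsum : ∑ i, p i = 1)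
    (ψ : Fin n → (Fin n → ℂ)) (hψ : ∀ i, ψ i = (Real.sqrt (p i) : ℂ) • φ i)
    (hind : LinearIndependent ℂ ψ)
    (Δ : Matrix (Fin n) (Fin n) ℂ)
    (hΔ : Δ = ∑ i, Matrix.vecMulVec (ψ i) (star (ψ i)))
    (hΔH : Δ.IsHermitian)
    (lam : ℝ) (hlam : IsLeast (Set.range hΔH.eigenvalues) lam)
    (β : ℝ) (hβ1 : 1 - (n : ℝ) * lam ≤ β) (hβ2 : β < 1)
    (γ : ℝ) (hγ : γ = Real.sqrt ((1 - β) / n))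
    (μ : Fin n → (Fin n → ℂ)) (hμ : ∀ i, μ i = (γ : ℂ) • (Δ⁻¹ *ᵥ ψ i))
    (S : Fin n → Matrix (Fin n) (Fin n) ℂ)
    (hS : ∀ i, S i = Matrix.vecMulVec (μ i) (star (μ i)))
    (S0 : Matrix (Fin n) (Fin n) ℂ) (hS0 : S0 = 1 - ∑ i, S i) :
    S0.PosSemidef ∧ (Δ * S0).trace = (β : ℂ) ∧
    ∀ (N0 : Matrix (Fin n) (Fin n) ℂ) (N : Fin n → Matrix (Fin n) (Fin n) ℂ),
      N0.PosSemidef → (∀ i, (N i).PosSemidef) → (N0 + ∑ i, N i = 1) →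
      (Δ * N0).trace = (β : ℂ) →
      ∑ i, p i * (star (φ i) ⬝ᵥ (N i *ᵥ φ i)).re
        ≤ ∑ i, p i * (star (φ i) ⬝ᵥ (S i *ᵥ φ i)).re := by
  classical
  obtain ⟨i0, hi0⟩ := hlam.1
  have hn : 0 < n := i0.pos
  have hn' : (0:ℝ) < n := by exact_mod_cast hn
  -- gamma arithmetic
  have hβn : 0 ≤ (1 - β) / n := div_nonneg (by linarith) hn'.le
  have hγ2 : γ ^ 2 = (1 - β) / n := by rw [hγ, Real.sq_sqrt hβn]
  have hnγ2 : (n : ℝ) * γ ^ 2 = 1 - β := by rw [hγ2]; field_simp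
  have hclam : γ ^ 2 ≤ lam := by
    rw [hγ2, div_le_iff₀ hn']; nlinarith
  -- sqrt p facts
  have hsq : ∀ i, ((Real.sqrt (p i) : ℂ)) * ((Real.sqrt (p i) : ℂ)) = ((p i : ℝ) : ℂ) := by
    intro i; rw [← Complex.ofReal_mul, Real.mul_self_sqrt (hp i).le]
  have hψψ : ∀ i, star (ψ i) ⬝ᵥ ψ i = ((p i : ℝ) : ℂ) := by
    intro i
    rw [hψ, star_smul, smul_dotProduct, dotProduct_smul, smul_eq_mul, smul_eq_mul,
      hunit, mul_one, Complex.star_def, Complex.conj_ofReal, hsq]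
  have hscale : ∀ (M : Matrix (Fin n) (Fin n) ℂ) i,
      star (ψ i) ⬝ᵥ (M *ᵥ ψ i) = ((p i : ℝ) : ℂ) * (star (φ i) ⬝ᵥ (M *ᵥ φ i)) := by
    intro M i
    rw [hψ, star_smul, Matrix.mulVec_smul, smul_dotProduct, dotProduct_smul,
      smul_eq_mul, smul_eq_mul, Complex.star_def, Complex.conj_ofReal, ← mul_assoc, hsq]
  -- Δ *ᵥ v expansion
  have hmv : ∀ v, Δ *ᵥ v = ∑ i, (star (ψ i) ⬝ᵥ v) • ψ i := by
    intro v
    rw [hΔ, mySum_mulVec]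
    exact Finset.sum_congr rfl fun i _ => myVecMulVec_mulVec _ _ _
  -- ψ spans
  haveI : Nonempty (Fin n) := ⟨i0⟩
  have hspan : Submodule.span ℂ (Set.range ψ) = ⊤ :=
    hind.span_eq_top_of_card_eq_finrank (by simp)
  -- positive definiteness of Δ
  have hPD : Δ.PosDef := by
    refine Matrix.PosDef.of_dotProduct_mulVec_pos hΔH fun x hx => ?_
    have hval : star x ⬝ᵥ (Δ *ᵥ x) = ((∑ i, Complex.normSq (star (ψ i) ⬝ᵥ x) : ℝ) : ℂ) := by
      rw [hmv, myDotProduct_sum]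
      push_cast
      refine Finset.sum_congr rfl fun i _ => ?_
      rw [dotProduct_smul, smul_eq_mul, Matrix.star_dotProduct]
      simp only [Complex.star_def]
      rw [mul_comm, Complex.mul_conj, Complex.normSq_conj]
    rw [hval, Complex.zero_lt_real]
    have hex : ∃ i, star (ψ i) ⬝ᵥ x ≠ 0 := by
      by_contra h
      push_neg at h
      apply hx
      have hxmem : x ∈ Submodule.span ℂ (Set.range ψ) := hspan ▸ Submodule.mem_top
      obtain ⟨c, hc⟩ := (Submodule.mem_span_range_iff_exists_fun ℂ).mp hxmem
      have hzero : star x ⬝ᵥ x = 0 := by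
        have hsx : star x = ∑ i, star (c i) • star (ψ i) := by
          rw [← hc]; simp [star_sum, star_smul]
        rw [hsx, mySum_dotProduct]
        simp only [smul_dotProduct, smul_eq_mul]
        simp [h]
      exact dotProduct_star_self_eq_zero.mp hzero
    obtain ⟨i, hi⟩ := hex
    refine Finset.sum_pos' (fun j _ => Complex.normSq_nonneg _) ⟨i, Finset.mem_univ i, ?_⟩
    exact Complex.normSq_pos.mpr hi
  -- invertibility
  have hdet : IsUnit Δ.det := (Matrix.isUnit_iff_isUnit_det Δ).mp hPD.isUnit
  have hΔΔinv : Δ * Δ⁻¹ = 1 := Matrix.mul_nonsing_inv Δ hdet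
  have hΔinvΔ : Δ⁻¹ * Δ = 1 := Matrix.nonsing_inv_mul Δ hdet
  -- key orthogonality
  have hK : ∀ i j, star (ψ i) ⬝ᵥ (Δ⁻¹ *ᵥ ψ j) = if i = j then 1 else 0 := by
    intro i j
    have h1 : ∑ k, ((star (ψ k) ⬝ᵥ (Δ⁻¹ *ᵥ ψ j)) - if k = j then 1 else 0) • ψ k = 0 := by
      simp only [sub_smul, Finset.sum_sub_distrib]
      rw [← hmv, Matrix.mulVec_mulVec, hΔΔinv, Matrix.one_mulVec]
      simp [ite_smul]
    have h2 := Fintype.linearIndependent_iff.mp hind _ h1 i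
    have h3 := sub_eq_zero.mp h2
    simpa using h3
  -- Hermitian inverse
  have hΔinvH : (Δ⁻¹)ᴴ = Δ⁻¹ := hΔH.inv.eq
  -- dot products with μ
  have hμψ : ∀ i j, star (μ i) ⬝ᵥ ψ j = (γ : ℂ) * (if i = j then 1 else 0) := by
    intro i j
    rw [hμ, star_smul, smul_dotProduct, Complex.star_def, Complex.conj_ofReal,
      smul_eq_mul, Matrix.star_mulVec, hΔinvH, ← Matrix.dotProduct_mulVec, hK i j]
  have hψμ : ∀ j i, star (ψ j) ⬝ᵥ μ i = (γ : ℂ) * (if j = i then 1 else 0) := by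
    intro j i
    rw [hμ, dotProduct_smul, smul_eq_mul, hK j i]
  have hSval : ∀ i j, star (ψ j) ⬝ᵥ (S i *ᵥ ψ j) = if i = j then ((γ:ℂ) * (γ:ℂ)) else 0 := by
    intro i j
    rw [hS, myVecMulVec_mulVec, dotProduct_smul, smul_eq_mul, hμψ i j, hψμ j i]
    by_cases hij : i = j <;> simp [hij]
  -- trace formula
  have htr : ∀ M : Matrix (Fin n) (Fin n) ℂ,
      (Δ * M).trace = ∑ j, star (ψ j) ⬝ᵥ (M *ᵥ ψ j) := by
    intro M
    rw [hΔ, Finset.sum_mul, Matrix.trace_sum]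
    exact Finset.sum_congr rfl fun j _ => myTrace_vecMulVec_mul _ _ _
  -- sum of the S i
  have hSsum : ∑ i, S i = ((γ:ℂ) * (γ:ℂ)) • Δ⁻¹ := by
    have hSi : ∀ i, S i = ((γ:ℂ) * (γ:ℂ)) •
        (Δ⁻¹ * Matrix.vecMulVec (ψ i) (star (ψ i)) * (Δ⁻¹)ᴴ) := by
      intro i
      rw [hS, hμ, myVecMulVec_smul, myVecMulVec_conj]
      congr 1
      simp [Complex.star_def, Complex.conj_ofReal]
    rw [Finset.sum_congr rfl fun i _ => hSi i, ← Finset.smul_sum]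
    congr 1
    calc ∑ i, Δ⁻¹ * Matrix.vecMulVec (ψ i) (star (ψ i)) * (Δ⁻¹)ᴴ
        = Δ⁻¹ * (∑ i, Matrix.vecMulVec (ψ i) (star (ψ i))) * (Δ⁻¹)ᴴ := by
          rw [Finset.mul_sum, Finset.sum_mul]
      _ = Δ⁻¹ * Δ * Δ⁻¹ := by rw [← hΔ, hΔinvH]
      _ = Δ⁻¹ := by rw [hΔinvΔ, Matrix.one_mul]
  -- spectral decomposition
  obtain ⟨V, ev, hV1, hV2, hev0, hevlam, hdec⟩ :
      ∃ (V : Matrix (Fin n) (Fin n) ℂ) (ev : Fin n → ℝ),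
        V * star V = 1 ∧ star V * V = 1 ∧ (∀ i, 0 < ev i) ∧ (∀ i, lam ≤ ev i) ∧
        Δ = V * Matrix.diagonal (fun i => ((ev i : ℝ) : ℂ)) * star V := by
    refine ⟨(hΔH.eigenvectorUnitary : Matrix (Fin n) (Fin n) ℂ), hΔH.eigenvalues,
      (Matrix.mem_unitaryGroup_iff).mp hΔH.eigenvectorUnitary.2,
      (Matrix.mem_unitaryGroup_iff').mp hΔH.eigenvectorUnitary.2,
      hPD.eigenvalues_pos, fun i => hlam.2 ⟨i, rfl⟩, ?_⟩
    exact hΔH.spectral_theorem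
  have hinv : Δ⁻¹ = V * Matrix.diagonal (fun i => ((ev i : ℝ) : ℂ)⁻¹) * star V := by
    apply Matrix.inv_eq_right_inv
    calc Δ * (V * Matrix.diagonal (fun i => ((ev i : ℝ) : ℂ)⁻¹) * star V)
        = V * (Matrix.diagonal (fun i => ((ev i : ℝ) : ℂ)) * (star V * V)
            * Matrix.diagonal (fun i => ((ev i : ℝ) : ℂ)⁻¹)) * star V := by
          rw [hdec]; simp only [Matrix.mul_assoc]
      _ = V * star V := by
          rw [hV2, Matrix.mul_one, Matrix.diagonal_mul_diagonal]
          have hone : (fun i => ((ev i : ℝ) : ℂ) * ((ev i : ℝ) : ℂ)⁻¹) = fun _ => (1:ℂ) := by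
            funext i
            have hne : ((ev i : ℝ) : ℂ) ≠ 0 := Complex.ofReal_ne_zero.mpr (hev0 i).ne'
            field_simp
          rw [hone, Matrix.diagonal_one, Matrix.mul_one]
      _ = 1 := hV1
  have hS0eq : S0 = V * Matrix.diagonal
      (fun i => ((1 - γ^2 * (ev i)⁻¹ : ℝ) : ℂ)) * star V := by
    rw [hS0, hSsum, hinv]
    have hd : Matrix.diagonal (fun i => ((1 - γ^2 * (ev i)⁻¹ : ℝ) : ℂ))
        = 1 - ((γ:ℂ) * (γ:ℂ)) • Matrix.diagonal (fun i => ((ev i : ℝ) : ℂ)⁻¹) := by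
      have hfun : (fun i => ((1 - γ^2 * (ev i)⁻¹ : ℝ) : ℂ))
          = fun i => (1:ℂ) - ((γ:ℂ) * (γ:ℂ)) • ((ev i : ℝ) : ℂ)⁻¹ := by
        funext i
        push_cast
        rw [smul_eq_mul]
        ring
      rw [hfun, ← Matrix.diagonal_sub, ← Matrix.diagonal_smul, Matrix.diagonal_one]
      rfl
    rw [hd, Matrix.mul_sub, Matrix.sub_mul, Matrix.mul_one, hV1]
    congr 1
    rw [Matrix.mul_smul, Matrix.smul_mul]
  refine ⟨?_, ?_, ?_⟩
  · -- positive semidefiniteness of S0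
    rw [hS0eq, Matrix.star_eq_conjTranspose V]
    exact (Matrix.posSemidef_diagonal_iff.mpr fun i => Complex.zero_le_real.mpr (by
      have h1 : lam ≤ ev i := hevlam i
      have h2 : 0 < ev i := hev0 i
      have h3 : γ^2 * (ev i)⁻¹ ≤ 1 := by
        rw [mul_inv_le_iff₀ h2, one_mul]; linarith
      linarith)).mul_mul_conjTranspose_same V
  · -- trace value
    rw [htr]
    have : ∀ j, star (ψ j) ⬝ᵥ (S0 *ᵥ ψ j) = ((p j : ℝ) : ℂ) - ((γ:ℂ) * (γ:ℂ)) := by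
      intro j
      rw [hS0, Matrix.sub_mulVec, dotProduct_sub, Matrix.one_mulVec, hψψ,
        mySum_mulVec, myDotProduct_sum]
      congr 1
      rw [Finset.sum_congr rfl fun i _ => hSval i j]
      simp
    rw [Finset.sum_congr rfl fun j _ => this j, Finset.sum_sub_distrib]
    rw [← Complex.ofReal_sum, hpsum]
    have hγγ : ((γ:ℂ) * (γ:ℂ)) = ((γ^2 : ℝ) : ℂ) := by push_cast; ring
    rw [hγγ]
    simp only [Finset.sum_const, Finset.card_univ, Fintype.card_fin, nsmul_eq_mul]
    rw [show ((n:ℂ) * ((γ^2:ℝ):ℂ)) = (((n:ℝ) * γ^2 : ℝ) : ℂ) by push_cast; ring, hnγ2]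
    push_cast
    ring
  · -- optimality
    intro N0 N hN0 hN hsum htrN
    have hre : ∀ (M : Matrix (Fin n) (Fin n) ℂ) i,
        p i * (star (φ i) ⬝ᵥ (M *ᵥ φ i)).re = (star (ψ i) ⬝ᵥ (M *ᵥ ψ i)).re := by
      intro M i
      rw [hscale, Complex.re_ofReal_mul]
    -- value of the SIM side
    have hRHS : ∑ i, p i * (star (φ i) ⬝ᵥ (S i *ᵥ φ i)).re = 1 - β := by
      rw [Finset.sum_congr rfl fun i _ => hre (S i) i]
      rw [Finset.sum_congr rfl fun i _ => by rw [hSval i i, if_pos rfl]]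
      simp only [Complex.mul_re, Complex.ofReal_re, Complex.ofReal_im, mul_zero, sub_zero]
      rw [Finset.sum_const, Finset.card_univ, Fintype.card_fin, nsmul_eq_mul]
      rw [show (n:ℝ) * (γ * γ) = (n:ℝ) * γ^2 by ring, hnγ2]
    rw [hRHS]
    rw [Finset.sum_congr rfl fun i _ => hre (N i) i]
    -- nonnegativity of cross terms
    have hnonneg : ∀ i j, 0 ≤ (star (ψ j) ⬝ᵥ (N i *ᵥ ψ j)).re := by
      intro i j
      have := (hN i).dotProduct_mulVec_nonneg (ψ j)
      exact (Complex.le_def.mp this).1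
    calc ∑ i, (star (ψ i) ⬝ᵥ (N i *ᵥ ψ i)).re
        ≤ ∑ i, ∑ j, (star (ψ j) ⬝ᵥ (N i *ᵥ ψ j)).re := by
          refine Finset.sum_le_sum fun i _ => ?_
          exact Finset.single_le_sum (fun j _ => hnonneg i j) (Finset.mem_univ i)
      _ = ∑ j, (star (ψ j) ⬝ᵥ ((∑ i, N i) *ᵥ ψ j)).re := by
          rw [Finset.sum_comm]
          refine Finset.sum_congr rfl fun j _ => ?_
          rw [mySum_mulVec, myDotProduct_sum, Complex.re_sum]
      _ = ∑ j, ((p j : ℝ) - (star (ψ j) ⬝ᵥ (N0 *ᵥ ψ j)).re) := by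
          refine Finset.sum_congr rfl fun j _ => ?_
          have hsum' : (∑ i, N i) = 1 - N0 := by rw [← hsum]; abel
          rw [hsum', Matrix.sub_mulVec, dotProduct_sub, Matrix.one_mulVec, hψψ,
            Complex.sub_re, Complex.ofReal_re]
      _ = 1 - β := by
          rw [Finset.sum_sub_distrib, hpsum]
          have : ∑ j, (star (ψ j) ⬝ᵥ (N0 *ᵥ ψ j)).re = β := by
            have h1 : (∑ j, star (ψ j) ⬝ᵥ (N0 *ᵥ ψ j)) = (β : ℂ) := by rw [← htr, htrN]
            calc ∑ j, (star (ψ j) ⬝ᵥ (N0 *ᵥ ψ j)).re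
                = (∑ j, star (ψ j) ⬝ᵥ (N0 *ᵥ ψ j)).re := (Complex.re_sum _ _).symm
              _ = β := by rw [h1, Complex.ofReal_re]
          rw [this]
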